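/- If H is a subgraph of G and G is proportionally k-choosable, then H is proportionally k-choosable. -/
import Mathlib


open Finset

/-- The multiplicity of a color `c` in a list assignment `L`: the number of
vertices whose list contains `c`. -/
def eta {V : Type*} [Fintype V] (L : V → Finset ℕ) (c : ℕ) : ℕ :=
  (Finset.univ.filter fun v => c ∈ L v).card

/-- `f` is a proportional `L`-coloring of `G` (with lists of size `k`): a proper
`L`-coloring in which each color `c` of the palette is used `⌊η(c)/k⌋` or `⌈η(c)/k⌉` times. -/
def IsProportionalColoring {V : Type*} [Fintype V] (G : SimpleGraph V) (k : ℕ)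
    (L : V → Finset ℕ) (f : V → ℕ) : Prop :=
  (∀ v, f v ∈ L v) ∧ (∀ u v, G.Adj u v → f u ≠ f v) ∧
  ∀ c, (∃ v, c ∈ L v) →
    (Finset.univ.filter fun v => f v = c).card = eta L c / k ∨
    (Finset.univ.filter fun v => f v = c).card = (eta L c + k - 1) / k

/-- `G` is proportionally `k`-choosable: every `k`-assignment admits a proportional coloring. -/
def ProportionallyChoosable {V : Type*} [Fintype V] (G : SimpleGraph V) (k : ℕ) : Prop :=
  ∀ L : V → Finset ℕ, (∀ v, (L v).card = k) → ∃ f : V → ℕ, IsProportionalColoring G k L f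

/-- If `H` is (isomorphic to) a subgraph of `G`, i.e. there is an injective map
`φ` from `V(H)` to `V(G)` carrying edges of `H` to edges of `G`, and `G` is
proportionally `k`-choosable, then so is `H`. -/
theorem stmt_6 {V W : Type*} [Fintype V] [Fintype W] (G : SimpleGraph V)
    (H : SimpleGraph W) (φ : W → V) (hφ : Function.Injective φ)
    (hadj : ∀ u v, H.Adj u v → G.Adj (φ u) (φ v)) (k : ℕ)
    (h : ProportionallyChoosable G k) : ProportionallyChoosable H k := by
  classical
  intro L hL
  set N : ℕ := (Finset.univ.sup fun w : W => (L w).sup id) + 1 with hN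
  have hlt : ∀ w c, c ∈ L w → c < N := by
    intro w c hc
    have : c ≤ (Finset.univ.sup fun w : W => (L w).sup id) :=
      le_trans (Finset.le_sup (f := id) hc) (Finset.le_sup (f := fun w => (L w).sup id) (mem_univ w))
    omega
  set S : Finset ℕ := (Finset.range k).image (· + N) with hS
  have hScard : S.card = k := by
    rw [hS, Finset.card_image_of_injective _ (fun a b hab => by simpa using hab),
      Finset.card_range]
  have hSge : ∀ c ∈ S, N ≤ c := by
    intro c hc
    simp only [hS, Finset.mem_image, Finset.mem_range] at hc
    obtain ⟨a, _, rfl⟩ := hc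
    omega
  set L' : V → Finset ℕ := fun v => if hv : ∃ w, φ w = v then L hv.choose else S with hL'
  have hL'φ : ∀ w, L' (φ w) = L w := by
    intro w
    have hv : ∃ w', φ w' = φ w := ⟨w, rfl⟩
    simp only [hL', dif_pos hv]
    rw [hφ hv.choose_spec]
  have hL'card : ∀ v, (L' v).card = k := by
    intro v
    by_cases hv : ∃ w, φ w = v
    · obtain ⟨w, rfl⟩ := hv; rw [hL'φ]; exact hL w
    · simp only [hL', dif_neg hv]; exact hScard
  obtain ⟨f', hf1, hf2, hf3⟩ := h L' hL'card
  refine ⟨fun w => f' (φ w), ?_, ?_, ?_⟩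
  · intro w; rw [← hL'φ]; exact hf1 _
  · intro u v huv; exact hf2 _ _ (hadj u v huv)
  · rintro c ⟨w0, hw0⟩
    have hcN : c < N := hlt _ _ hw0
    have hcount : (Finset.univ.filter fun w => f' (φ w) = c).card
        = (Finset.univ.filter fun v => f' v = c).card := by
      rw [← Finset.card_image_of_injective _ hφ]
      congr 1
      ext v
      simp only [Finset.mem_image, Finset.mem_filter, Finset.mem_univ, true_and]
      constructor
      · rintro ⟨w, hw, rfl⟩; exact hw
      · intro hv
        by_cases hvr : ∃ w, φ w = v
        · obtain ⟨w, rfl⟩ := hvr; exact ⟨w, hv, rfl⟩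
        · exfalso
          have hmem := hf1 v
          simp only [hL', dif_neg hvr] at hmem
          rw [hv] at hmem
          exact absurd hcN (not_lt.2 (hSge _ hmem))
    have heta : eta L c = eta L' c := by
      unfold eta
      rw [← Finset.card_image_of_injective _ hφ]
      congr 1
      ext v
      simp only [Finset.mem_image, Finset.mem_filter, Finset.mem_univ, true_and]
      constructor
      · rintro ⟨w, hw, rfl⟩; rw [hL'φ]; exact hw
      · intro hv
        by_cases hvr : ∃ w, φ w = v
        · obtain ⟨w, rfl⟩ := hvr; rw [hL'φ] at hv; exact ⟨w, hv, rfl⟩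
        · exfalso
          simp only [hL', dif_neg hvr] at hv
          exact absurd hcN (not_lt.2 (hSge _ hv))
    rw [hcount, heta]
    exact hf3 c ⟨φ w0, by rw [hL'φ]; exact hw0⟩
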